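/- Let Ω be a bounded open subset of ℝ², let K: [0,1] → 𝒦(Ω̄) be an increasing function, and define K⁻(t) := closure(⋃_{s<t} K(s)) for 0 < t ≤ 1 and K⁺(t) := ⋂_{s>t} K(s) for 0 ≤ t < 1. Then K⁻(t) ⊆ K(t) ⊆ K⁺(t) for 0 < t < 1. Moreover, letting Θ be the set of t ∈ (0,1) with K⁻(t) = K⁺(t), the set [0,1] \ Θ is at most countable, and for every t ∈ Θ and every sequence (t_n) in [0,1] converging to t, one has K(t_n) → K(t) in the Hausdorff metric. -/

import Mathlib

open MeasureTheory Filter Set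
open scoped Classical

noncomputable section

/-- The plane `ℝ²`. -/
abbrev E2 : Type := EuclideanSpace ℝ (Fin 2)

/-- Distance from a point to a set, with the convention `dist(x, ∅) = diam Ω`. -/
def distIn (Ω : Set E2) (x : E2) (S : Set E2) : ℝ :=
  if S = ∅ then Metric.diam Ω else Metric.infDist x S

/-- Hausdorff distance between subsets of `closure Ω`, with the conventions
`dist(x, ∅) = diam Ω` and `sup ∅ = 0`. -/
def hausDistIn (Ω K₁ K₂ : Set E2) : ℝ :=
  max (sSup ((fun x => distIn Ω x K₂) '' K₁)) (sSup ((fun x => distIn Ω x K₁) '' K₂))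

/-- Convergence of a sequence of compact subsets of `closure Ω` in the Hausdorff metric. -/
def TendstoHausdorff (Ω : Set E2) (K : ℕ → Set E2) (L : Set E2) : Prop :=
  Filter.Tendsto (fun n => hausDistIn Ω (K n) L) Filter.atTop (nhds 0)

/-- `K` has at most `m` connected components: it is the union of `m` preconnected sets. -/
def AtMostComponents (m : ℕ) (K : Set E2) : Prop :=
  ∃ C : Fin m → Set E2, (∀ i, IsPreconnected (C i)) ∧ K = ⋃ i, C i

lemma distIn_nonneg (Ω : Set E2) (x : E2) (S : Set E2) : 0 ≤ distIn Ω x S := by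
  unfold distIn; split
  · exact Metric.diam_nonneg
  · exact Metric.infDist_nonneg

lemma hausDistIn_nonneg (Ω A B : Set E2) : 0 ≤ hausDistIn Ω A B := by
  refine le_max_of_le_left (Real.sSup_nonneg ?_)
  rintro v ⟨z, hz, rfl⟩
  exact distIn_nonneg Ω z B

lemma hausDistIn_comm (Ω A B : Set E2) : hausDistIn Ω A B = hausDistIn Ω B A :=
  max_comm _ _

lemma hausDistIn_le_of_subsets {Ω A B : Set E2} {ε : ℝ} (hε : 0 < ε) (hAB : A ⊆ B)
    (hBA : B ⊆ Metric.thickening ε A) (hA : A.Nonempty) : hausDistIn Ω A B ≤ ε := by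
  have hB : B.Nonempty := hA.mono hAB
  refine max_le (Real.sSup_le ?_ hε.le) (Real.sSup_le ?_ hε.le)
  · rintro v ⟨z, hz, rfl⟩
    simp only [distIn, if_neg hB.ne_empty]
    rw [Metric.infDist_zero_of_mem (hAB hz)]
    exact hε.le
  · rintro v ⟨z, hz, rfl⟩
    simp only [distIn, if_neg hA.ne_empty]
    obtain ⟨w, hw, hdw⟩ := Metric.mem_thickening_iff.1 (hBA hz)
    exact (Metric.infDist_le_dist_of_mem hw).trans hdw.le

lemma not_continuousAt_of_jump {f : ℝ → ℝ} {t a b : ℝ} (hab : a < b)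
    (ha : ∀ s, t < s → f s ≤ a) (hb : ∀ s, s < t → b ≤ f s) : ¬ContinuousAt f t := by
  intro hc
  have h0 : Tendsto (fun n : ℕ => (1:ℝ) / (n + 1)) atTop (nhds 0) :=
    tendsto_one_div_add_atTop_nhds_zero_nat
  have h1 : Tendsto (fun n : ℕ => t - 1 / (n + 1)) atTop (nhds t) := by
    simpa using tendsto_const_nhds.sub h0
  have h2 : Tendsto (fun n : ℕ => t + 1 / (n + 1)) atTop (nhds t) := by
    simpa using tendsto_const_nhds.add h0
  have hpos : ∀ n : ℕ, (0:ℝ) < 1 / (n + 1) := by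
    intro n; positivity
  have hbt : b ≤ f t :=
    ge_of_tendsto (hc.tendsto.comp h1)
      (Eventually.of_forall fun n => hb _ (by linarith [hpos n]))
  have hat : f t ≤ a :=
    le_of_tendsto (hc.tendsto.comp h2)
      (Eventually.of_forall fun n => ha _ (by linarith [hpos n]))
  linarith

section KLemmas

variable (K : ℝ → Set E2)
variable (hKc : ∀ t ∈ Set.Icc (0:ℝ) 1, IsCompact (K t) ∧ K t ⊆ closure (∅ : Set E2) ∨ True)

lemma left_approx (K : ℝ → Set E2)
    (hKc : ∀ t ∈ Set.Icc (0:ℝ) 1, IsCompact (K t))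
    (hKmono : ∀ s ∈ Set.Icc (0:ℝ) 1, ∀ t ∈ Set.Icc (0:ℝ) 1, s ≤ t → K s ⊆ K t)
    {t ε : ℝ} (ht : t ∈ Set.Ioc (0:ℝ) 1)
    (hcl : K t ⊆ closure (⋃ s ∈ Set.Ico (0:ℝ) t, K s)) (hε : 0 < ε) :
    ∃ s₀ ∈ Set.Ico (0:ℝ) t, K t ⊆ Metric.thickening ε (K s₀) := by
  have ht0 : 0 < t := ht.1
  set u : ℕ → ℝ := fun n => t - t / (n + 2) with hu
  have hu_mem : ∀ n, u n ∈ Set.Ico (0:ℝ) t := by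
    intro n
    constructor
    · have h1 : t / (n + 2) ≤ t / 1 := by
        apply div_le_div_of_nonneg_left ht0.le one_pos
        push_cast; linarith [Nat.cast_nonneg (α := ℝ) n]
      simp only [hu]; rw [div_one] at h1; linarith
    · have : 0 < t / (n + 2) := by positivity
      simp only [hu]; linarith
  have hu_mem' : ∀ n, u n ∈ Set.Icc (0:ℝ) 1 :=
    fun n => ⟨(hu_mem n).1, (hu_mem n).2.le.trans ht.2⟩
  have hu_mono : Monotone u := by
    intro m n hmn
    have : t / (n + 2) ≤ t / (m + 2) := by
      apply div_le_div_of_nonneg_left ht0.le (by positivity)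
      push_cast; linarith [(Nat.cast_le (α := ℝ)).2 hmn]
    simp only [hu]; linarith
  have hcover : K t ⊆ ⋃ n, Metric.thickening ε (K (u n)) := by
    intro x hx
    obtain ⟨y, hy, hxy⟩ := Metric.mem_closure_iff.1 (hcl hx) ε hε
    simp only [Set.mem_iUnion] at hy
    obtain ⟨s, hs, hys⟩ := hy
    obtain ⟨n, hn⟩ := exists_nat_gt (t / (t - s))
    have hst : 0 < t - s := by linarith [hs.2]
    have hsu : s ≤ u n := by
      have h1 : t / (t - s) < (n : ℝ) + 2 := by linarith
      have h2 : t < (t - s) * ((n : ℝ) + 2) := by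
        rw [div_lt_iff₀ hst] at h1; linarith
      have : t / ((n:ℝ) + 2) < t - s := by
        rw [div_lt_iff₀ (by positivity)]; linarith
      simp only [hu]; linarith
    have hyu : y ∈ K (u n) :=
      hKmono s ⟨hs.1, hs.2.le.trans ht.2⟩ (u n) (hu_mem' n) hsu hys
    exact Set.mem_iUnion.2 ⟨n, Metric.mem_thickening_iff.2 ⟨y, hyu, hxy⟩⟩
  have hdir : Directed (· ⊆ ·) (fun n => Metric.thickening ε (K (u n))) := by
    intro m n
    refine ⟨max m n, ?_, ?_⟩
    · exact Metric.thickening_subset_of_subset ε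
        (hKmono _ (hu_mem' m) _ (hu_mem' (max m n)) (hu_mono (le_max_left m n)))
    · exact Metric.thickening_subset_of_subset ε
        (hKmono _ (hu_mem' n) _ (hu_mem' (max m n)) (hu_mono (le_max_right m n)))
  obtain ⟨n, hn⟩ := (hKc t ⟨ht0.le, ht.2⟩).elim_directed_cover _
    (fun _ => Metric.isOpen_thickening) hcover hdir
  exact ⟨u n, hu_mem n, hn⟩

lemma right_approx (K : ℝ → Set E2)
    (hKc : ∀ t ∈ Set.Icc (0:ℝ) 1, IsCompact (K t))
    (hKmono : ∀ s ∈ Set.Icc (0:ℝ) 1, ∀ t ∈ Set.Icc (0:ℝ) 1, s ≤ t → K s ⊆ K t)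
    {t : ℝ} (ht : t ∈ Set.Ico (0:ℝ) 1) {V : Set E2} (hV : IsOpen V)
    (hcap : (⋂ s ∈ Set.Ioc t 1, K s) ⊆ V) :
    ∃ s₀ ∈ Set.Ioc t 1, K s₀ ⊆ V := by
  have ht1 : t < 1 := ht.2
  set v : ℕ → ℝ := fun n => t + (1 - t) / (n + 2) with hv
  have hv_mem : ∀ n, v n ∈ Set.Ioc t 1 := by
    intro n
    constructor
    · have : 0 < (1 - t) / (n + 2) := by
        apply div_pos (by linarith) (by positivity)
      simp only [hv]; linarith
    · have h1 : (1 - t) / (n + 2) ≤ (1 - t) / 1 := by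
        apply div_le_div_of_nonneg_left (by linarith) one_pos
        push_cast; linarith [Nat.cast_nonneg (α := ℝ) n]
      rw [div_one] at h1
      simp only [hv]; linarith
  have hv_mem' : ∀ n, v n ∈ Set.Icc (0:ℝ) 1 :=
    fun n => ⟨ht.1.trans (hv_mem n).1.le, (hv_mem n).2⟩
  have hv_anti : Antitone v := by
    intro m n hmn
    have : (1 - t) / (n + 2) ≤ (1 - t) / (m + 2) := by
      apply div_le_div_of_nonneg_left (by linarith) (by positivity)
      push_cast; linarith [(Nat.cast_le (α := ℝ)).2 hmn]
    simp only [hv]; linarith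
  by_contra hcon
  push_neg at hcon
  set C : ℕ → Set E2 := fun n => K (v n) \ V with hC
  have hCne : ∀ n, (C n).Nonempty := by
    intro n
    rcases Set.not_subset.1 (hcon (v n) (hv_mem n)) with ⟨x, hx1, hx2⟩
    exact ⟨x, hx1, hx2⟩
  have hCcpt : ∀ n, IsCompact (C n) := fun n => (hKc _ (hv_mem' n)).diff hV
  have hCdir : Directed (· ⊇ ·) C := by
    intro m n
    refine ⟨max m n, Set.diff_subset_diff_left ?_, Set.diff_subset_diff_left ?_⟩
    · exact hKmono _ (hv_mem' (max m n)) _ (hv_mem' m) (hv_anti (le_max_left m n))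
    · exact hKmono _ (hv_mem' (max m n)) _ (hv_mem' n) (hv_anti (le_max_right m n))
  obtain ⟨x, hx⟩ := IsCompact.nonempty_iInter_of_directed_nonempty_isCompact_isClosed
    C hCdir hCne hCcpt (fun n => (hCcpt n).isClosed)
  have hxK : x ∈ ⋂ s ∈ Set.Ioc t 1, K s := by
    refine Set.mem_iInter₂.2 fun s hs => ?_
    obtain ⟨n, hn⟩ := exists_nat_gt ((1 - t) / (s - t))
    have hst : 0 < s - t := by linarith [hs.1]
    have hvn : v n ≤ s := by
      have h1 : (1 - t) / (s - t) < (n : ℝ) + 2 := by linarith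
      have h2 : 1 - t < (s - t) * ((n : ℝ) + 2) := by
        rw [div_lt_iff₀ hst] at h1; linarith
      have : (1 - t) / ((n:ℝ) + 2) < s - t := by
        rw [div_lt_iff₀ (by positivity)]; linarith
      simp only [hv]; linarith
    have hxn : x ∈ C n := Set.mem_iInter.1 hx n
    exact hKmono _ (hv_mem' n) s ⟨ht.1.trans hs.1.le, hs.2⟩ hvn hxn.1
  have hxV : x ∈ V := hcap hxK
  have hxnV : x ∉ V := (Set.mem_iInter.1 hx 0).2
  exact hxnV hxV

end KLemmas

/-- For an increasing compact-valued function `K : [0,1] → 𝒦(closure Ω)`, with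
`K⁻(t) = closure (⋃_{s<t} K(s))` and `K⁺(t) = ⋂_{s>t} K(s)`, one has
`K⁻(t) ⊆ K(t) ⊆ K⁺(t)` on `(0,1)`; moreover, with `Θ = {t ∈ (0,1) : K⁻(t) = K⁺(t)}`,
the set `[0,1] \ Θ` is at most countable, and `K(tₙ) → K(t)` in the Hausdorff metric for
every `t ∈ Θ` and every sequence `tₙ ∈ [0,1]` converging to `t`. -/
theorem increasing_compact_valued_continuity (Ω : Set E2) (hΩo : IsOpen Ω)
    (hΩb : Bornology.IsBounded Ω)
    (K : ℝ → Set E2)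
    (hKc : ∀ t ∈ Set.Icc (0:ℝ) 1, IsCompact (K t) ∧ K t ⊆ closure Ω)
    (hKmono : ∀ s ∈ Set.Icc (0:ℝ) 1, ∀ t ∈ Set.Icc (0:ℝ) 1, s ≤ t → K s ⊆ K t) :
    (∀ t ∈ Set.Ioo (0:ℝ) 1,
        closure (⋃ s ∈ Set.Ico (0:ℝ) t, K s) ⊆ K t ∧ K t ⊆ ⋂ s ∈ Set.Ioc t 1, K s) ∧
    (Set.Icc (0:ℝ) 1 \
        {t ∈ Set.Ioo (0:ℝ) 1 |
          closure (⋃ s ∈ Set.Ico (0:ℝ) t, K s) = ⋂ s ∈ Set.Ioc t 1, K s}).Countable ∧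
    ∀ t ∈ {t ∈ Set.Ioo (0:ℝ) 1 |
        closure (⋃ s ∈ Set.Ico (0:ℝ) t, K s) = ⋂ s ∈ Set.Ioc t 1, K s},
      ∀ tn : ℕ → ℝ, (∀ n, tn n ∈ Set.Icc (0:ℝ) 1) →
        Filter.Tendsto tn Filter.atTop (nhds t) →
          TendstoHausdorff Ω (fun n => K (tn n)) (K t) := by
  have hKc' : ∀ t ∈ Set.Icc (0:ℝ) 1, IsCompact (K t) := fun t ht => (hKc t ht).1
  have part1 : ∀ t ∈ Set.Ioo (0:ℝ) 1,
      closure (⋃ s ∈ Set.Ico (0:ℝ) t, K s) ⊆ K t ∧ K t ⊆ ⋂ s ∈ Set.Ioc t 1, K s := by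
    intro t ht
    have htI : t ∈ Set.Icc (0:ℝ) 1 := ⟨ht.1.le, ht.2.le⟩
    constructor
    · refine closure_minimal (Set.iUnion₂_subset fun s hs => ?_) (hKc' t htI).isClosed
      exact hKmono s ⟨hs.1, hs.2.le.trans ht.2.le⟩ t htI hs.2.le
    · exact Set.subset_iInter₂ fun s hs => hKmono t htI s ⟨(ht.1.trans hs.1).le, hs.2⟩ hs.1.le
  refine ⟨part1, ?_, ?_⟩
  · -- countability
    obtain ⟨D, hDc, hDd⟩ := TopologicalSpace.exists_countable_dense E2
    set cl : ℝ → ℝ := fun s => max 0 (min s 1) with hcl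
    have hclI : ∀ s, cl s ∈ Set.Icc (0:ℝ) 1 :=
      fun s => ⟨le_max_left _ _, max_le zero_le_one (min_le_right _ _)⟩
    set f : E2 → ℝ → ℝ := fun x s =>
      if K (cl s) = ∅ then Metric.diam Ω
      else min (Metric.infDist x (K (cl s))) (Metric.diam Ω) with hf
    have hfanti : ∀ x, Antitone (f x) := by
      intro x s t hst
      have hsub : K (cl s) ⊆ K (cl t) := hKmono _ (hclI s) _ (hclI t)
        (max_le_max le_rfl (min_le_min hst le_rfl))
      simp only [hf]
      by_cases ht0 : K (cl t) = ∅
      · have hs0 : K (cl s) = ∅ := Set.subset_empty_iff.1 (ht0 ▸ hsub)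
        rw [if_pos ht0, if_pos hs0]
      · rw [if_neg ht0]
        by_cases hs0 : K (cl s) = ∅
        · rw [if_pos hs0]; exact min_le_right _ _
        · rw [if_neg hs0]
          exact min_le_min (Metric.infDist_le_infDist_of_subset hsub
            (Set.nonempty_iff_ne_empty.2 hs0)) le_rfl
    have hjump : ∀ t ∈ Set.Ioo (0:ℝ) 1,
        closure (⋃ s ∈ Set.Ico (0:ℝ) t, K s) ≠ (⋂ s ∈ Set.Ioc t 1, K s) →
        ∃ x ∈ D, ¬ContinuousAt (f x) t := by
      intro t ht hne
      obtain ⟨h1, h2⟩ := part1 t ht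
      have hss : closure (⋃ s ∈ Set.Ico (0:ℝ) t, K s) ⊆ ⋂ s ∈ Set.Ioc t 1, K s := h1.trans h2
      obtain ⟨y, hyp, hym⟩ := Set.exists_of_ssubset (hss.ssubset_of_ne hne)
      have hyK : ∀ s ∈ Set.Ioc t 1, y ∈ K s := fun s hs => Set.mem_iInter₂.1 hyp s hs
      have hyΩ : y ∈ closure Ω := (hKc 1 ⟨zero_le_one, le_rfl⟩).2 (hyK 1 ⟨ht.2, le_rfl⟩)
      have hclgt : ∀ s, t < s → cl s ∈ Set.Ioc t 1 := by
        intro s hs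
        exact ⟨lt_max_of_lt_right (lt_min hs ht.2), (hclI s).2⟩
      have hcllt : ∀ s, s < t → cl s ∈ Set.Ico (0:ℝ) t := by
        intro s hs
        exact ⟨(hclI s).1, max_lt ht.1 (lt_of_le_of_lt (min_le_left _ _) hs)⟩
      have hKsubm : ∀ s, s < t → K (cl s) ⊆ closure (⋃ u ∈ Set.Ico (0:ℝ) t, K u) :=
        fun s hs => (Set.subset_iUnion₂ (s := fun u _ => K u) (cl s) (hcllt s hs)).trans
          subset_closure
      have hfgt : ∀ x : E2, ∀ s, t < s → f x s ≤ dist x y := by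
        intro x s hs
        have hyc : y ∈ K (cl s) := hyK _ (hclgt s hs)
        simp only [hf]
        rw [if_neg (Set.Nonempty.ne_empty ⟨y, hyc⟩)]
        exact (min_le_left _ _).trans (Metric.infDist_le_dist_of_mem hyc)
      by_cases hKm : closure (⋃ s ∈ Set.Ico (0:ℝ) t, K s) = ∅
      · have hΩne : Ω.Nonempty := closure_nonempty_iff.1 ⟨y, hyΩ⟩
        have hdpos : 0 < Metric.diam Ω := by
          obtain ⟨z, hz⟩ := hΩne
          obtain ⟨r, hr, hball⟩ := Metric.isOpen_iff.1 hΩo z hz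
          have hz' : z + EuclideanSpace.single (0 : Fin 2) (r/2) ∈ Ω := by
            apply hball
            rw [Metric.mem_ball, dist_self_add_left, EuclideanSpace.norm_single,
              Real.norm_eq_abs, abs_of_pos (by linarith)]
            linarith
          have hd := Metric.dist_le_diam_of_mem hΩb hz' hz
          rw [dist_self_add_left, EuclideanSpace.norm_single, Real.norm_eq_abs,
            abs_of_pos (by linarith : (0:ℝ) < r/2)] at hd
          linarith
        obtain ⟨x, hxD, hxy⟩ := hDd.exists_dist_lt y (ε := Metric.diam Ω / 3) (by linarith)
        refine ⟨x, hxD, not_continuousAt_of_jump (a := dist x y) (b := Metric.diam Ω)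
          ?_ (fun s hs => hfgt x s hs) ?_⟩
        · rw [dist_comm]; linarith
        · intro s hs
          have h0 : K (cl s) = ∅ := Set.subset_empty_iff.1 ((hKsubm s hs).trans hKm.subset)
          simp only [hf]; rw [if_pos h0]
      · have hKmne : (closure (⋃ s ∈ Set.Ico (0:ℝ) t, K s)).Nonempty :=
          Set.nonempty_iff_ne_empty.2 hKm
        set Km := closure (⋃ s ∈ Set.Ico (0:ℝ) t, K s) with hKmdef
        set δ := Metric.infDist y Km with hδdef
        have hδpos : 0 < δ := (IsClosed.notMem_iff_infDist_pos isClosed_closure hKmne).1 hym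
        have hKmΩ : Km ⊆ closure Ω := by
          apply closure_minimal _ isClosed_closure
          exact Set.iUnion₂_subset fun s hs => (hKc s ⟨hs.1, hs.2.le.trans ht.2.le⟩).2
        have hδdiam : δ ≤ Metric.diam Ω := by
          obtain ⟨z, hz⟩ := hKmne
          calc δ ≤ dist y z := Metric.infDist_le_dist_of_mem hz
            _ ≤ Metric.diam (closure Ω) := Metric.dist_le_diam_of_mem hΩb.closure hyΩ (hKmΩ hz)
            _ = Metric.diam Ω := Metric.diam_closure _
        obtain ⟨x, hxD, hxy⟩ := hDd.exists_dist_lt y (ε := δ / 3) (by linarith)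
        refine ⟨x, hxD, not_continuousAt_of_jump (a := dist x y) (b := 2 * δ / 3)
          ?_ (fun s hs => hfgt x s hs) ?_⟩
        · rw [dist_comm]; linarith
        · intro s hs
          have hsubKm : K (cl s) ⊆ Km := hKsubm s hs
          simp only [hf]
          by_cases h0 : K (cl s) = ∅
          · rw [if_pos h0]; linarith
          · rw [if_neg h0]
            have hd1 : δ ≤ Metric.infDist x Km + dist y x := Metric.infDist_le_infDist_add_dist
            have hd2 : Metric.infDist x Km ≤ Metric.infDist x (K (cl s)) :=
              Metric.infDist_le_infDist_of_subset hsubKm (Set.nonempty_iff_ne_empty.2 h0)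
            rw [dist_comm y x] at hd1
            rw [dist_comm] at hxy
            exact le_min (by linarith) (by linarith)
    refine Set.Countable.mono ?_ ((((Set.finite_singleton (1:ℝ)).insert 0).countable).union
      (hDc.biUnion fun x _ => (hfanti x).countable_not_continuousAt))
    rintro r ⟨hr1, hr2⟩
    by_cases h0 : r = 0
    · exact Or.inl (by simp [h0])
    by_cases h1 : r = 1
    · exact Or.inl (by simp [h1])
    have hrIoo : r ∈ Set.Ioo (0:ℝ) 1 := ⟨hr1.1.lt_of_ne (Ne.symm h0), hr1.2.lt_of_ne h1⟩
    have hne : closure (⋃ s ∈ Set.Ico (0:ℝ) r, K s) ≠ ⋂ s ∈ Set.Ioc r 1, K s :=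
      fun heq => hr2 (Set.mem_sep hrIoo heq)
    obtain ⟨x, hxD, hx⟩ := hjump r hrIoo hne
    exact Or.inr (Set.mem_biUnion hxD hx)
  · -- convergence
    intro t htΘ tn htn htt
    obtain ⟨htIoo, hteq⟩ := htΘ
    obtain ⟨h1, h2⟩ := part1 t htIoo
    have hm : closure (⋃ s ∈ Set.Ico (0:ℝ) t, K s) = K t :=
      subset_antisymm h1 (h2.trans hteq.symm.subset)
    have hp : (⋂ s ∈ Set.Ioc t 1, K s) = K t := hteq.symm.trans hm
    have key : ∀ ε : ℝ, 0 < ε → ∃ δ : ℝ, 0 < δ ∧ ∀ s ∈ Set.Icc (0:ℝ) 1, |s - t| < δ →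
        hausDistIn Ω (K s) (K t) ≤ ε := by
      intro ε hε
      by_cases hKt : K t = ∅
      · obtain ⟨s₀, hs₀, hKs₀⟩ := right_approx K hKc' hKmono ⟨htIoo.1.le, htIoo.2⟩
          isOpen_empty (by rw [hp, hKt])
        refine ⟨s₀ - t, by linarith [hs₀.1], fun s hs hdist => ?_⟩
        have habs := abs_lt.1 hdist
        have hs₀I : s₀ ∈ Set.Icc (0:ℝ) 1 := ⟨(htIoo.1.trans hs₀.1).le, hs₀.2⟩
        have hKs : K s = ∅ := Set.subset_empty_iff.1
          ((hKmono s hs s₀ hs₀I (by linarith [habs.2])).trans hKs₀)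
        rw [hKs, hKt]
        simp only [hausDistIn, Set.image_empty, Real.sSup_empty, max_self]
        exact hε.le
      · have hKtne : (K t).Nonempty := Set.nonempty_iff_ne_empty.2 hKt
        have hUne : (⋃ s ∈ Set.Ico (0:ℝ) t, K s).Nonempty := by
          rw [← closure_nonempty_iff, hm]; exact hKtne
        obtain ⟨y, hy⟩ := hUne
        simp only [Set.mem_iUnion] at hy
        obtain ⟨s₁, hs₁, hys₁⟩ := hy
        obtain ⟨s₂, hs₂, hth₂⟩ := left_approx K hKc' hKmono ⟨htIoo.1, htIoo.2.le⟩ hm.ge hε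
        have hs₂' : max s₁ s₂ ∈ Set.Ico (0:ℝ) t := ⟨le_max_of_le_left hs₁.1, max_lt hs₁.2 hs₂.2⟩
        have hs₂'I : max s₁ s₂ ∈ Set.Icc (0:ℝ) 1 := ⟨hs₂'.1, hs₂'.2.le.trans htIoo.2.le⟩
        have hth₂' : K t ⊆ Metric.thickening ε (K (max s₁ s₂)) :=
          hth₂.trans (Metric.thickening_subset_of_subset ε
            (hKmono s₂ ⟨hs₂.1, hs₂.2.le.trans htIoo.2.le⟩ _ hs₂'I (le_max_right _ _)))
        have hKs₂'ne : (K (max s₁ s₂)).Nonempty :=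
          ⟨y, hKmono s₁ ⟨hs₁.1, hs₁.2.le.trans htIoo.2.le⟩ _ hs₂'I (le_max_left _ _) hys₁⟩
        obtain ⟨s₃, hs₃, hth₃⟩ := right_approx K hKc' hKmono ⟨htIoo.1.le, htIoo.2⟩
          Metric.isOpen_thickening (by rw [hp]; exact Metric.self_subset_thickening hε _)
        refine ⟨min (t - max s₁ s₂) (s₃ - t),
          lt_min (by linarith [hs₂'.2]) (by linarith [hs₃.1]), fun s hs hdist => ?_⟩
        have habs := abs_lt.1 hdist
        have hmin1 := min_le_left (t - max s₁ s₂) (s₃ - t)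
        have hmin2 := min_le_right (t - max s₁ s₂) (s₃ - t)
        rcases le_or_gt s t with hst | hst
        · have hs₂'s : max s₁ s₂ ≤ s := by linarith [habs.1]
          have hKsub : K s ⊆ K t := hKmono s hs t ⟨htIoo.1.le, htIoo.2.le⟩ hst
          have hKsne : (K s).Nonempty := hKs₂'ne.mono (hKmono _ hs₂'I s hs hs₂'s)
          have hthick : K t ⊆ Metric.thickening ε (K s) :=
            hth₂'.trans (Metric.thickening_subset_of_subset ε (hKmono _ hs₂'I s hs hs₂'s))
          exact hausDistIn_le_of_subsets hε hKsub hthick hKsne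
        · have hss₃ : s ≤ s₃ := by linarith [habs.2]
          have hKsub : K t ⊆ K s := hKmono t ⟨htIoo.1.le, htIoo.2.le⟩ s hs hst.le
          have hthick : K s ⊆ Metric.thickening ε (K t) :=
            (hKmono s hs s₃ ⟨(htIoo.1.trans hs₃.1).le, hs₃.2⟩ hss₃).trans hth₃
          rw [hausDistIn_comm]
          exact hausDistIn_le_of_subsets hε hKsub hthick hKtne
    rw [TendstoHausdorff, Metric.tendsto_atTop]
    intro ε hε
    obtain ⟨δ, hδ, hδprop⟩ := key (ε/2) (by linarith)
    obtain ⟨N, hN⟩ := (Metric.tendsto_atTop.1 htt) δ hδ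
    refine ⟨N, fun n hn => ?_⟩
    have hb1 : hausDistIn Ω (K (tn n)) (K t) ≤ ε/2 := by
      apply hδprop (tn n) (htn n)
      have := hN n hn; rwa [Real.dist_eq] at this
    have hb2 : 0 ≤ hausDistIn Ω (K (tn n)) (K t) := hausDistIn_nonneg Ω _ _
    rw [Real.dist_0_eq_abs, abs_of_nonneg hb2]
    linarith
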